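/- In a pivotal G-braided category with pivotal crossing φ, the twist is compatible with the crossing: for all α, β ∈ G and X ∈ C_α, φ_β(θ_X) = φ_2(β,α)_X^{-1} ∘ φ_2(β^{-1}αβ, β)_X ∘ θ_{φ_β(X)}. -/

import Mathlib

set_option linter.unusedSectionVars false

open CategoryTheory MonoidalCategory CategoryTheory.Limits

universe w x v u v₂ u₂ v₃ u₃

namespace SurgeryHQFT

/-- A pivotal category: a monoidal category with a dual object `dual X` for every object `X`,
together with the four (co)evaluation morphisms, satisfying the zig-zag identities, the
coincidence of left and right duals of morphisms, the coincidence of the left and right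
monoidal constraints, and the unit condition. -/
class Pivotal (C : Type u) [Category.{v} C] [MonoidalCategory C] where
  dual : C → C
  ev : ∀ X : C, dual X ⊗ X ⟶ 𝟙_ C
  coev : ∀ X : C, 𝟙_ C ⟶ X ⊗ dual X
  ev' : ∀ X : C, X ⊗ dual X ⟶ 𝟙_ C
  coev' : ∀ X : C, 𝟙_ C ⟶ dual X ⊗ X
  zig₁ : ∀ X : C,
    (λ_ X).inv ≫ (coev X ▷ X) ≫ (α_ X (dual X) X).hom ≫ (X ◁ ev X) ≫ (ρ_ X).hom = 𝟙 X
  zig₂ : ∀ X : C,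
    (ρ_ (dual X)).inv ≫ (dual X ◁ coev X) ≫ (α_ (dual X) X (dual X)).inv
      ≫ (ev X ▷ dual X) ≫ (λ_ (dual X)).hom = 𝟙 (dual X)
  zig₃ : ∀ X : C,
    (ρ_ X).inv ≫ (X ◁ coev' X) ≫ (α_ X (dual X) X).inv ≫ (ev' X ▷ X) ≫ (λ_ X).hom = 𝟙 X
  zig₄ : ∀ X : C,
    (λ_ (dual X)).inv ≫ (coev' X ▷ dual X) ≫ (α_ (dual X) X (dual X)).hom
      ≫ (dual X ◁ ev' X) ≫ (ρ_ (dual X)).hom = 𝟙 (dual X)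
  dual_hom_eq : ∀ {X Y : C} (f : X ⟶ Y),
    (ρ_ (dual Y)).inv ≫ (dual Y ◁ (coev X ≫ (f ▷ dual X)))
      ≫ (α_ (dual Y) Y (dual X)).inv ≫ (ev Y ▷ dual X) ≫ (λ_ (dual X)).hom
    = (λ_ (dual Y)).inv ≫ ((coev' X ≫ (dual X ◁ f)) ▷ dual Y)
      ≫ (α_ (dual X) Y (dual Y)).hom ≫ (dual X ◁ ev' Y) ≫ (ρ_ (dual X)).hom
  constraint_eq : ∀ X Y : C,
    (ρ_ (dual X ⊗ dual Y)).inv ≫ ((dual X ⊗ dual Y) ◁ coev (Y ⊗ X))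
      ≫ (α_ (dual X) (dual Y) ((Y ⊗ X) ⊗ dual (Y ⊗ X))).hom
      ≫ (dual X ◁ ((dual Y ◁ (α_ Y X (dual (Y ⊗ X))).hom)
            ≫ (α_ (dual Y) Y (X ⊗ dual (Y ⊗ X))).inv
            ≫ (ev Y ▷ (X ⊗ dual (Y ⊗ X))) ≫ (λ_ (X ⊗ dual (Y ⊗ X))).hom))
      ≫ (α_ (dual X) X (dual (Y ⊗ X))).inv ≫ (ev X ▷ dual (Y ⊗ X)) ≫ (λ_ (dual (Y ⊗ X))).hom
    = (λ_ (dual X ⊗ dual Y)).inv ≫ (coev' (Y ⊗ X) ▷ (dual X ⊗ dual Y))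
      ≫ (α_ (dual (Y ⊗ X)) (Y ⊗ X) (dual X ⊗ dual Y)).hom
      ≫ (dual (Y ⊗ X) ◁ ((α_ Y X (dual X ⊗ dual Y)).hom
            ≫ (Y ◁ ((α_ X (dual X) (dual Y)).inv ≫ (ev' X ▷ dual Y) ≫ (λ_ (dual Y)).hom))
            ≫ ev' Y))
      ≫ (ρ_ (dual (Y ⊗ X))).hom
  unit_ev : (ρ_ (dual (𝟙_ C))).inv ≫ ev (𝟙_ C) = (λ_ (dual (𝟙_ C))).inv ≫ ev' (𝟙_ C)

namespace Pivotal

variable {C : Type u} [Category.{v} C] [MonoidalCategory C] [Pivotal C]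

/-- The dual of a morphism in a pivotal category. -/
def dualHom {X Y : C} (f : X ⟶ Y) : dual Y ⟶ dual X :=
  (ρ_ (dual Y)).inv ≫ (dual Y ◁ (coev X ≫ (f ▷ dual X)))
    ≫ (α_ (dual Y) Y (dual X)).inv ≫ (ev Y ▷ dual X) ≫ (λ_ (dual X)).hom

/-- The left trace of an endomorphism in a pivotal category. -/
def trl {X : C} (f : X ⟶ X) : 𝟙_ C ⟶ 𝟙_ C :=
  coev' X ≫ (dual X ◁ f) ≫ ev X

/-- The right trace of an endomorphism in a pivotal category. -/
def trr {X : C} (f : X ⟶ X) : 𝟙_ C ⟶ 𝟙_ C :=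
  coev X ≫ (f ▷ dual X) ≫ ev' X

/-- The left dimension of an object. -/
def diml (X : C) : 𝟙_ C ⟶ 𝟙_ C := trl (𝟙 X)

/-- The right dimension of an object. -/
def dimr (X : C) : 𝟙_ C ⟶ 𝟙_ C := trr (𝟙 X)

end Pivotal

open Pivotal

section Functors

variable {C : Type u} [Category.{v} C] [MonoidalCategory C] [Pivotal C]
variable {D : Type u₂} [Category.{v₂} D] [MonoidalCategory D] [Pivotal D]

/-- The canonical comparison morphism `F^l(X) : F(X^*) ⟶ F(X)^*` for a strong monoidal
functor between pivotal categories. -/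
def Fl (F : C ⥤ D) [m : F.Monoidal] (X : C) : F.obj (dual X) ⟶ dual (F.obj X) :=
  (ρ_ (F.obj (dual X))).inv
    ≫ (F.obj (dual X) ◁ coev (F.obj X))
    ≫ (α_ (F.obj (dual X)) (F.obj X) (dual (F.obj X))).inv
    ≫ ((Functor.LaxMonoidal.μ F (dual X) X ≫ F.map (ev X) ≫ Functor.OplaxMonoidal.η F)
        ▷ dual (F.obj X))
    ≫ (λ_ (dual (F.obj X))).hom

/-- The canonical comparison morphism `F^r(X) : F(X^*) ⟶ F(X)^*` for a strong monoidal
functor between pivotal categories. -/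
def Fr (F : C ⥤ D) [m : F.Monoidal] (X : C) : F.obj (dual X) ⟶ dual (F.obj X) :=
  (λ_ (F.obj (dual X))).inv
    ≫ (coev' (F.obj X) ▷ F.obj (dual X))
    ≫ (α_ (dual (F.obj X)) (F.obj X) (F.obj (dual X))).hom
    ≫ (dual (F.obj X) ◁ (Functor.LaxMonoidal.μ F X (dual X) ≫ F.map (ev' X)
          ≫ Functor.OplaxMonoidal.η F))
    ≫ (ρ_ (dual (F.obj X))).hom

end Functors


section MonHelpers
variable {C : Type u} [Category.{v} C] [MonoidalCategory C]
variable {D : Type u₂} [Category.{v₂} D] [MonoidalCategory D]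

/-- The unit morphism of a monoidal functor (with explicit monoidal structure). -/
def mε (F : C ⥤ D) (m : F.Monoidal) : 𝟙_ D ⟶ F.obj (𝟙_ C) :=
  letI := m; Functor.LaxMonoidal.ε F

/-- The tensorator of a monoidal functor (with explicit monoidal structure). -/
def mμ (F : C ⥤ D) (m : F.Monoidal) (X Y : C) : F.obj X ⊗ F.obj Y ⟶ F.obj (X ⊗ Y) :=
  letI := m; Functor.LaxMonoidal.μ F X Y

/-- The inverse of the unit morphism of a monoidal functor. -/
def mη (F : C ⥤ D) (m : F.Monoidal) : F.obj (𝟙_ C) ⟶ 𝟙_ D :=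
  letI := m; Functor.OplaxMonoidal.η F

/-- The inverse of the tensorator of a monoidal functor. -/
def mδ (F : C ⥤ D) (m : F.Monoidal) (X Y : C) : F.obj (X ⊗ Y) ⟶ F.obj X ⊗ F.obj Y :=
  letI := m; Functor.OplaxMonoidal.δ F X Y

end MonHelpers

section Graded

variable (k : Type w) [CommRing k] (G : Type x) [Group G]
variable (C : Type u) [Category.{v} C] [MonoidalCategory C] [Pivotal C]
  [Preadditive C] [CategoryTheory.Linear k C] [MonoidalPreadditive C] [MonoidalLinear k C]

/-- A pivotal `G`-graded category over `k`: a system of pairwise disjoint homogeneous degrees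
for objects such that the unit is of degree `1`, monoidal products multiply the degrees,
duals invert degrees, and morphisms between objects of different degrees vanish. -/
structure GGraded where
  mem : C → G → Prop
  mem_unique : ∀ {X : C} {a b : G}, mem X a → mem X b → a = b
  unit_mem : mem (𝟙_ C) 1
  tensor_mem : ∀ {X Y : C} {a b : G}, mem X a → mem Y b → mem (X ⊗ Y) (a * b)
  dual_mem : ∀ {X : C} {a : G}, mem X a → mem (Pivotal.dual X) a⁻¹
  hom_vanish : ∀ {X Y : C} {a b : G}, mem X a → mem Y b → a ≠ b → ∀ f : X ⟶ Y, f = 0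

variable {G C}

/-- The canonical identification `(φ a).obj X ⟶ (φ b).obj X` induced by an equality `a = b`. -/
def φObjCast (φ : G → C ⥤ C) {a b : G} (h : a = b) (X : C) : (φ a).obj X ⟶ (φ b).obj X :=
  eqToHom (by rw [h])

variable (G C)

/-- A (pivotal) `G`-crossed category: a pivotal `G`-graded category equipped with a crossing,
i.e. a strong monoidal functor from `G` to the monoidal category of `k`-linear strong monoidal
auto-equivalences of `C`, such that `φ a` maps degree `b` to degree `a⁻¹ * b * a`. -/
structure GCrossedCat extends GGraded G C where
  φ : G → C ⥤ C
  φM : ∀ a : G, (φ a).Monoidal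
  φ_add : ∀ (a : G) {X Y : C} (f g : X ⟶ Y), (φ a).map (f + g) = (φ a).map f + (φ a).map g
  φ_smul : ∀ (a : G) (c : k) {X Y : C} (f : X ⟶ Y), (φ a).map (c • f) = c • (φ a).map f
  φ_equiv : ∀ a : G, (φ a).IsEquivalence
  φ_mem : ∀ (a : G) {X : C} {b : G}, mem X b → mem ((φ a).obj X) (a⁻¹ * b * a)
  φ₂ : ∀ (a b : G) (X : C), (φ a).obj ((φ b).obj X) ≅ (φ (b * a)).obj X
  φ₀ : ∀ X : C, X ≅ (φ (1 : G)).obj X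
  φ₂_natural : ∀ (a b : G) {X Y : C} (f : X ⟶ Y),
    (φ a).map ((φ b).map f) ≫ (φ₂ a b Y).hom = (φ₂ a b X).hom ≫ (φ (b * a)).map f
  φ₀_natural : ∀ {X Y : C} (f : X ⟶ Y),
    f ≫ (φ₀ Y).hom = (φ₀ X).hom ≫ (φ (1 : G)).map f
  φ₂_monoidal : ∀ (a b : G) (X Y : C),
    mμ (φ a) (φM a) ((φ b).obj X) ((φ b).obj Y)
        ≫ (φ a).map (mμ (φ b) (φM b) X Y)
        ≫ (φ₂ a b (X ⊗ Y)).hom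
      = ((φ₂ a b X).hom ⊗ₘ (φ₂ a b Y).hom) ≫ mμ (φ (b * a)) (φM (b * a)) X Y
  φ₂_unit : ∀ (a b : G),
    mε (φ (b * a)) (φM (b * a))
      = mε (φ a) (φM a) ≫ (φ a).map (mε (φ b) (φM b)) ≫ (φ₂ a b (𝟙_ C)).hom
  φ₀_monoidal : ∀ X Y : C,
    (φ₀ (X ⊗ Y)).hom
      = ((φ₀ X).hom ⊗ₘ (φ₀ Y).hom) ≫ mμ (φ (1 : G)) (φM 1) X Y
  φ₀_unit : (φ₀ (𝟙_ C)).hom = mε (φ (1 : G)) (φM 1)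
  φ_assoc : ∀ (a b c : G) (X : C),
    (φ₂ a b ((φ c).obj X)).hom ≫ (φ₂ (b * a) c X).hom
      = (φ a).map ((φ₂ b c X).hom) ≫ (φ₂ a (c * b) X).hom
          ≫ φObjCast φ (mul_assoc c b a) X
  φ_unit_left : ∀ (a : G) (X : C),
    (φ a).map ((φ₀ X).hom) ≫ (φ₂ a 1 X).hom ≫ φObjCast φ (one_mul a) X = 𝟙 ((φ a).obj X)
  φ_unit_right : ∀ (a : G) (X : C),
    (φ₀ ((φ a).obj X)).hom ≫ (φ₂ 1 a X).hom ≫ φObjCast φ (mul_one a) X = 𝟙 ((φ a).obj X)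

variable {k G C}

namespace GCrossedCat

variable (𝒞 : GCrossedCat k G C)

/-- The crossing of `𝒞` is pivotal if each functor `φ a` is pivotal, i.e. `F^l = F^r`. -/
def PivotalCrossing : Prop :=
  ∀ (a : G) (X : C), Fl (𝒞.φ a) (m := 𝒞.φM a) X = Fr (𝒞.φ a) (m := 𝒞.φM a) X

/-- Given (the inverse `ψi` of) an isomorphism `ψ : X ≅ (φ a).obj Y`, this is the isomorphism
`overline ψ : Y ⟶ (φ a⁻¹).obj X`, defined as `φ_{a⁻¹}(ψ⁻¹) ∘ φ₂(a⁻¹,a)_Y⁻¹ ∘ (φ₀)_Y`. -/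
def barHom {X Y : C} {a : G} (ψi : (𝒞.φ a).obj Y ⟶ X) : Y ⟶ (𝒞.φ a⁻¹).obj X :=
  (𝒞.φ₀ Y).hom ≫ φObjCast 𝒞.φ (show (1 : G) = a * a⁻¹ by group) Y
    ≫ (𝒞.φ₂ a⁻¹ a Y).inv ≫ (𝒞.φ a⁻¹).map ψi

lemma mem_φ_self {X : C} {a : G} (h : 𝒞.mem X a) : 𝒞.mem ((𝒞.φ a).obj X) a := by
  have h2 : a⁻¹ * a * a = a := by group
  have := 𝒞.φ_mem a h
  rwa [h2] at this

end GCrossedCat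

end Graded

section Braided

variable (k : Type w) [CommRing k] (G : Type x) [Group G]
variable (C : Type u) [Category.{v} C] [MonoidalCategory C] [Pivotal C]
  [Preadditive C] [CategoryTheory.Linear k C] [MonoidalPreadditive C] [MonoidalLinear k C]

/-- A `G`-braided category: a `G`-crossed category equipped with a `G`-braiding
`τ_{X,Y} : X ⊗ Y ⟶ Y ⊗ φ_{|Y|}(X)` (for `Y` homogeneous), natural in both variables,
satisfying the two hexagon-type axioms and invariance under the crossing. -/
structure GBraidedCat extends GCrossedCat k G C where
  τ : ∀ (X Y : C) (b : G), mem Y b → (X ⊗ Y ⟶ Y ⊗ (φ b).obj X)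
  τ_iso : ∀ (X Y : C) (b : G) (h : mem Y b), IsIso (τ X Y b h)
  τ_nat_left : ∀ {X X' : C} (f : X ⟶ X') (Y : C) (b : G) (h : mem Y b),
    (f ▷ Y) ≫ τ X' Y b h = τ X Y b h ≫ (Y ◁ (φ b).map f)
  τ_nat_right : ∀ (X : C) {Y Y' : C} (b : G) (h : mem Y b) (h' : mem Y' b) (g : Y ⟶ Y'),
    (X ◁ g) ≫ τ X Y' b h' = τ X Y b h ≫ (g ▷ (φ b).obj X)
  braiding₁ : ∀ (X Y Z : C) (b c : G) (hY : mem Y b) (hZ : mem Z c),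
    τ X (Y ⊗ Z) (b * c) (tensor_mem hY hZ)
      = (α_ X Y Z).inv ≫ (τ X Y b hY ▷ Z) ≫ (α_ Y ((φ b).obj X) Z).hom
          ≫ (Y ◁ τ ((φ b).obj X) Z c hZ) ≫ (α_ Y Z ((φ c).obj ((φ b).obj X))).inv
          ≫ ((Y ⊗ Z) ◁ (φ₂ c b X).hom)
  braiding₂ : ∀ (X Y Z : C) (c : G) (hZ : mem Z c),
    τ (X ⊗ Y) Z c hZ
      = (α_ X Y Z).hom ≫ (X ◁ τ Y Z c hZ) ≫ (α_ X Z ((φ c).obj Y)).inv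
          ≫ (τ X Z c hZ ▷ (φ c).obj Y) ≫ (α_ Z ((φ c).obj X) ((φ c).obj Y)).hom
          ≫ (Z ◁ mμ (φ c) (φM c) X Y)
  braiding₃ : ∀ (a : G) (X Y : C) (b : G) (hY : mem Y b),
    τ ((φ a).obj X) ((φ a).obj Y) (a⁻¹ * b * a) (φ_mem a hY)
        ≫ ((φ a).obj Y ◁ ((φ₂ (a⁻¹ * b * a) a X).hom
              ≫ φObjCast φ (show a * (a⁻¹ * b * a) = b * a by group) X
              ≫ (φ₂ a b X).inv))
        ≫ mμ (φ a) (φM a) Y ((φ b).obj X)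
      = mμ (φ a) (φM a) X Y ≫ (φ a).map (τ X Y b hY)

variable {k G C}

namespace GBraidedCat

variable (𝒞 : GBraidedCat k G C)

/-- The inverse of the `G`-braiding. -/
noncomputable def τinv (X Y : C) (b : G) (h : 𝒞.mem Y b) : Y ⊗ (𝒞.φ b).obj X ⟶ X ⊗ Y :=
  letI := 𝒞.τ_iso X Y b h
  inv (𝒞.τ X Y b h)

/-- The twist `θ_X = (ev_X ⊗ id)(id_{X^*} ⊗ τ_{X,X})(coev'_X ⊗ id_X) : X ⟶ φ_{|X|}(X)`. -/
def twist (X : C) (a : G) (h : 𝒞.mem X a) : X ⟶ (𝒞.φ a).obj X :=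
  (λ_ X).inv ≫ (coev' X ▷ X) ≫ (α_ (dual X) X X).hom
    ≫ (dual X ◁ 𝒞.τ X X a h) ≫ (α_ (dual X) X ((𝒞.φ a).obj X)).inv
    ≫ (ev X ▷ (𝒞.φ a).obj X) ≫ (λ_ ((𝒞.φ a).obj X)).hom

/-- The braiding of the neutral component `C_1`. -/
def nBraiding (X Y : C) (hY : 𝒞.mem Y 1) : X ⊗ Y ⟶ Y ⊗ X :=
  𝒞.τ X Y 1 hY ≫ (Y ◁ (𝒞.φ₀ X).inv)

/-- The twist of the neutral component `C_1`. -/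
def nTwist (X : C) (hX : 𝒞.mem X 1) : X ⟶ X :=
  𝒞.twist X 1 hX ≫ (𝒞.φ₀ X).inv

end GBraidedCat

variable (k G C)

/-- A `G`-ribbon category: a pivotal `G`-braided category whose crossing is pivotal and
whose twist is self-dual. -/
structure GRibbonCat extends GBraidedCat k G C where
  crossing_pivotal : toGCrossedCat.PivotalCrossing
  twist_selfdual : ∀ (X : C) (a : G) (hX : mem X a),
    Pivotal.dualHom (toGBraidedCat.twist X a hX)
      = toGBraidedCat.twist (dual ((φ a).obj X)) a⁻¹
            (dual_mem (toGCrossedCat.mem_φ_self hX))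
          ≫ Fl (φ a⁻¹) (m := φM a⁻¹) ((φ a).obj X)
          ≫ Pivotal.dualHom
              (φObjCast φ (show (1 : G) = a * a⁻¹ by group) X ≫ (φ₂ a⁻¹ a X).inv)
          ≫ Pivotal.dualHom (φ₀ X).hom

end Braided

section FusionAlg

variable {k : Type w} [CommRing k] {G : Type x} [Group G]
variable {C : Type u} [Category.{v} C] [MonoidalCategory C] [Pivotal C]
  [Preadditive C] [CategoryTheory.Linear k C] [MonoidalPreadditive C] [MonoidalLinear k C]

variable (k) (gr : GGraded G C)

/-- The homogeneous objects of a `G`-graded category. -/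
def Homog : Type _ := {X : C // ∃ a : G, gr.mem X a}

/-- The direct sum `⊕_X End(X)` over all homogeneous objects `X`. -/
abbrev Ltilde : Type _ := DirectSum (Homog gr) (fun X => (X.1 ⟶ X.1))

/-- The canonical inclusion of `End(X)` into `Ltilde`. -/
noncomputable def lofh (X : C) {a : G} (hX : gr.mem X a) (f : X ⟶ X) : Ltilde gr :=
  letI := Classical.decEq (Homog gr)
  DirectSum.lof k (Homog gr) (fun X => (X.1 ⟶ X.1)) ⟨X, ⟨a, hX⟩⟩ f

/-- The submodule of trace relations `⟨X, fg⟩ - ⟨Y, gf⟩`. -/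
noncomputable def fusionRel : Submodule k (Ltilde gr) :=
  Submodule.span k
    {x | ∃ (X Y : C) (a : G) (hX : gr.mem X a) (hY : gr.mem Y a) (f : Y ⟶ X) (g : X ⟶ Y),
      x = lofh k gr X hX (g ≫ f) - lofh k gr Y hY (f ≫ g)}

/-- The fusion algebra (as a `k`-module) of a `G`-graded category. -/
abbrev FusionL : Type _ := Ltilde gr ⧸ fusionRel k gr

/-- The class `⟨X, f⟩` of an endomorphism of a homogeneous object in the fusion algebra. -/
noncomputable def fcls (X : C) {a : G} (hX : gr.mem X a) (f : X ⟶ X) : FusionL k gr :=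
  Submodule.Quotient.mk (lofh k gr X hX f)

/-- The degree-`a` part of the fusion algebra. -/
noncomputable def FusionLsub (a : G) : Submodule k (FusionL k gr) :=
  Submodule.span k {x | ∃ (X : C) (hX : gr.mem X a) (f : X ⟶ X), x = fcls k gr X hX f}

end FusionAlg

section Fusion

variable (k : Type w) [CommRing k]
variable {C : Type u} [Category.{v} C] [Preadditive C] [CategoryTheory.Linear k C]

/-- An object `X` is simple if `End(X)` is a free `k`-module of rank one with basis `id_X`. -/
def SimpleObj (X : C) : Prop := ∀ f : X ⟶ X, ∃! c : k, f = c • 𝟙 X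

variable (C) [MonoidalCategory C] [Pivotal C] [MonoidalPreadditive C] [MonoidalLinear k C]
  [HasFiniteBiproducts C]

/-- A pre-fusion category over `k`: a split semisimple `k`-additive pivotal category
with simple unit object. -/
structure PreFusion : Prop where
  semisimple : ∀ X : C, ∃ (n : ℕ) (s : Fin n → C),
    (∀ i, SimpleObj k (s i)) ∧ Nonempty (X ≅ ⨁ s)
  hom_vanish : ∀ {X Y : C}, SimpleObj k X → SimpleObj k Y → IsEmpty (X ≅ Y) →
    ∀ f : X ⟶ Y, f = 0
  unit_simple : SimpleObj k (𝟙_ C)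

end Fusion

section TwistProof

open Pivotal Functor.LaxMonoidal Functor.OplaxMonoidal

variable {C : Type u} [Category.{v} C] [MonoidalCategory C]

private lemma slide_ev {Z W : C} (f : Z ⟶ 𝟙_ C) (g : W ⟶ 𝟙_ C) :
    (f ▷ W) ≫ (λ_ W).hom ≫ g = (Z ◁ g) ≫ (ρ_ Z).hom ≫ f := by
  calc (f ▷ W) ≫ (λ_ W).hom ≫ g
      = (f ▷ W) ≫ (𝟙_ C ◁ g) ≫ (λ_ (𝟙_ C)).hom := by
        rw [MonoidalCategory.leftUnitor_naturality]
    _ = (Z ◁ g) ≫ (f ▷ 𝟙_ C) ≫ (λ_ (𝟙_ C)).hom := by rw [← whisker_exchange_assoc]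
    _ = (Z ◁ g) ≫ (ρ_ Z).hom ≫ f := by
        rw [unitors_equal, MonoidalCategory.rightUnitor_naturality]

private lemma slide_coev {Z W : C} (f : 𝟙_ C ⟶ Z) (g : 𝟙_ C ⟶ W) :
    g ≫ (λ_ W).inv ≫ (f ▷ W) = f ≫ (ρ_ Z).inv ≫ (Z ◁ g) := by
  calc g ≫ (λ_ W).inv ≫ (f ▷ W)
      = (λ_ (𝟙_ C)).inv ≫ (𝟙_ C ◁ g) ≫ (f ▷ W) := by
        rw [MonoidalCategory.leftUnitor_inv_naturality_assoc]
    _ = (λ_ (𝟙_ C)).inv ≫ (f ▷ 𝟙_ C) ≫ (Z ◁ g) := by rw [whisker_exchange]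
    _ = f ≫ (ρ_ Z).inv ≫ (Z ◁ g) := by
        rw [unitors_inv_equal, ← MonoidalCategory.rightUnitor_inv_naturality_assoc]

variable [Pivotal C]

private lemma evA (A B : C) (E : A ⊗ B ⟶ 𝟙_ C) :
    (((ρ_ A).inv ≫ (A ◁ coev B) ≫ (α_ A B (dual B)).inv ≫ (E ▷ dual B)
        ≫ (λ_ (dual B)).hom) ▷ B) ≫ ev B = E := by
  calc (((ρ_ A).inv ≫ (A ◁ coev B) ≫ (α_ A B (dual B)).inv ≫ (E ▷ dual B)
        ≫ (λ_ (dual B)).hom) ▷ B) ≫ ev B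
      = ((ρ_ A).inv ▷ B) ≫ ((A ◁ coev B) ▷ B) ≫ ((α_ A B (dual B)).inv ▷ B)
          ≫ (α_ (A ⊗ B) (dual B) B).hom
          ≫ ((E ▷ (dual B ⊗ B)) ≫ (λ_ (dual B ⊗ B)).hom ≫ ev B) := by
        monoidal
    _ = ((ρ_ A).inv ▷ B) ≫ ((A ◁ coev B) ▷ B) ≫ ((α_ A B (dual B)).inv ▷ B)
          ≫ (α_ (A ⊗ B) (dual B) B).hom
          ≫ (((A ⊗ B) ◁ ev B) ≫ (ρ_ (A ⊗ B)).hom ≫ E) := by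
        rw [slide_ev]
    _ = (A ◁ ((λ_ B).inv ≫ (coev B ▷ B) ≫ (α_ B (dual B) B).hom ≫ (B ◁ ev B)
          ≫ (ρ_ B).hom)) ≫ E := by
        monoidal
    _ = E := by rw [Pivotal.zig₁]; simp

private lemma coevB (A B : C) (K : 𝟙_ C ⟶ A ⊗ B) (E' : B ⊗ A ⟶ 𝟙_ C)
    (hsnake : (ρ_ B).inv ≫ (B ◁ K) ≫ (α_ B A B).inv ≫ (E' ▷ B) ≫ (λ_ B).hom = 𝟙 B) :
    K ≫ (((λ_ A).inv ≫ (coev' B ▷ A) ≫ (α_ (dual B) B A).hom ≫ (dual B ◁ E')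
        ≫ (ρ_ (dual B)).hom) ▷ B) = coev' B := by
  calc K ≫ (((λ_ A).inv ≫ (coev' B ▷ A) ≫ (α_ (dual B) B A).hom ≫ (dual B ◁ E')
        ≫ (ρ_ (dual B)).hom) ▷ B)
      = (K ≫ (λ_ (A ⊗ B)).inv ≫ (coev' B ▷ (A ⊗ B)))
          ≫ (α_ (dual B) B (A ⊗ B)).hom ≫ (dual B ◁ (α_ B A B).inv)
          ≫ (dual B ◁ (E' ▷ B)) ≫ (dual B ◁ (λ_ B).hom) := by
        monoidal
    _ = (coev' B ≫ (ρ_ (dual B ⊗ B)).inv ≫ ((dual B ⊗ B) ◁ K))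
          ≫ (α_ (dual B) B (A ⊗ B)).hom ≫ (dual B ◁ (α_ B A B).inv)
          ≫ (dual B ◁ (E' ▷ B)) ≫ (dual B ◁ (λ_ B).hom) := by
        rw [slide_coev]
    _ = coev' B ≫ (dual B ◁ ((ρ_ B).inv ≫ (B ◁ K) ≫ (α_ B A B).inv ≫ (E' ▷ B)
          ≫ (λ_ B).hom)) := by
        monoidal
    _ = coev' B := by rw [hsnake]; simp

variable {D : Type u₂} [Category.{v₂} D] [MonoidalCategory D] [Pivotal D]

private lemma Fsnake (F : C ⥤ D) [F.Monoidal] (X : C) :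
    (ρ_ (F.obj X)).inv
      ≫ (F.obj X ◁ (ε F ≫ F.map (coev' X) ≫ δ F (dual X) X))
      ≫ (α_ (F.obj X) (F.obj (dual X)) (F.obj X)).inv
      ≫ ((μ F X (dual X) ≫ F.map (ev' X) ≫ η F) ▷ F.obj X)
      ≫ (λ_ (F.obj X)).hom = 𝟙 (F.obj X) := by
  have h := congrArg F.map (Pivotal.zig₃ X)
  simp only [F.map_comp, F.map_id, Functor.Monoidal.map_rightUnitor_inv,
    Functor.Monoidal.map_whiskerLeft, Functor.Monoidal.map_associator_inv,
    Functor.Monoidal.map_whiskerRight, Functor.Monoidal.map_leftUnitor,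
    Category.assoc, Functor.Monoidal.μ_δ_assoc, Functor.Monoidal.δ_μ_assoc,
    Functor.Monoidal.whiskerLeft_μ_δ_assoc, Functor.Monoidal.whiskerRight_μ_δ_assoc] at h
  simp only [MonoidalCategory.whiskerLeft_comp, MonoidalCategory.comp_whiskerRight,
    Category.assoc]
  convert h using 2

private lemma map_twist_aux (F : C ⥤ D) [F.Monoidal] {X Y : C} (t : X ⊗ X ⟶ X ⊗ Y) :
    F.map ((λ_ X).inv ≫ (coev' X ▷ X) ≫ (α_ (dual X) X X).hom ≫ (dual X ◁ t)
        ≫ (α_ (dual X) X Y).inv ≫ (ev X ▷ Y) ≫ (λ_ Y).hom)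
      = (λ_ (F.obj X)).inv
        ≫ ((ε F ≫ F.map (coev' X) ≫ δ F (dual X) X) ▷ F.obj X)
        ≫ (α_ (F.obj (dual X)) (F.obj X) (F.obj X)).hom
        ≫ (F.obj (dual X) ◁ (μ F X X ≫ F.map t ≫ δ F X Y))
        ≫ (α_ (F.obj (dual X)) (F.obj X) (F.obj Y)).inv
        ≫ ((μ F (dual X) X ≫ F.map (ev X) ≫ η F) ▷ F.obj Y)
        ≫ (λ_ (F.obj Y)).hom := by
  simp only [F.map_comp, Functor.Monoidal.map_leftUnitor_inv,
    Functor.Monoidal.map_whiskerRight, Functor.Monoidal.map_associator,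
    Functor.Monoidal.map_whiskerLeft, Functor.Monoidal.map_associator_inv,
    Functor.Monoidal.map_leftUnitor, Category.assoc,
    Functor.Monoidal.μ_δ_assoc, Functor.Monoidal.δ_μ_assoc,
    Functor.Monoidal.whiskerLeft_μ_δ_assoc, Functor.Monoidal.whiskerRight_μ_δ_assoc]
  simp only [MonoidalCategory.whiskerLeft_comp, MonoidalCategory.comp_whiskerRight,
    Category.assoc]

end TwistProof
section Statement

variable {k : Type w} [CommRing k] {G : Type x} [Group G]
variable {C : Type u} [Category.{v} C] [MonoidalCategory C] [Pivotal C]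
  [Preadditive C] [CategoryTheory.Linear k C] [MonoidalPreadditive C] [MonoidalLinear k C]

theorem statement12 (𝒞 : GBraidedCat k G C) (hpiv : 𝒞.toGCrossedCat.PivotalCrossing)
    (X : C) (a b : G) (hX : 𝒞.mem X a) :
    (𝒞.φ b).map (𝒞.twist X a hX)
      = 𝒞.twist ((𝒞.φ b).obj X) (b⁻¹ * a * b) (𝒞.φ_mem b hX)
        ≫ (𝒞.φ₂ (b⁻¹ * a * b) b X).hom
        ≫ φObjCast 𝒞.φ (show b * (b⁻¹ * a * b) = a * b by group) X
        ≫ (𝒞.φ₂ b a X).inv := by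
  letI : (𝒞.φ b).Monoidal := 𝒞.φM b
  have hpiv' : Fl (𝒞.φ b) X = Fr (𝒞.φ b) X := hpiv b X
  have hE : (Fl (𝒞.φ b) X ▷ (𝒞.φ b).obj X) ≫ ev ((𝒞.φ b).obj X)
      = Functor.LaxMonoidal.μ (𝒞.φ b) (Pivotal.dual X) X ≫ (𝒞.φ b).map (ev X)
          ≫ Functor.OplaxMonoidal.η (𝒞.φ b) := by
    unfold Fl; exact evA _ _ _
  have hK : (Functor.LaxMonoidal.ε (𝒞.φ b) ≫ (𝒞.φ b).map (coev' X)
        ≫ Functor.OplaxMonoidal.δ (𝒞.φ b) (Pivotal.dual X) X)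
        ≫ (Fl (𝒞.φ b) X ▷ (𝒞.φ b).obj X) = coev' ((𝒞.φ b).obj X) := by
    rw [hpiv']; unfold Fr
    exact coevB _ _ _ _ (Fsnake (𝒞.φ b) X)
  have hμ : ∀ (Y Z : C), mμ (𝒞.φ b) (𝒞.φM b) Y Z = Functor.LaxMonoidal.μ (𝒞.φ b) Y Z :=
    fun _ _ => rfl
  have hτ : Functor.LaxMonoidal.μ (𝒞.φ b) X X ≫ (𝒞.φ b).map (𝒞.τ X X a hX)
        ≫ Functor.OplaxMonoidal.δ (𝒞.φ b) X ((𝒞.φ a).obj X)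
      = 𝒞.τ ((𝒞.φ b).obj X) ((𝒞.φ b).obj X) (b⁻¹ * a * b) (𝒞.φ_mem b hX)
        ≫ ((𝒞.φ b).obj X ◁ ((𝒞.φ₂ (b⁻¹ * a * b) b X).hom
            ≫ φObjCast 𝒞.φ (show b * (b⁻¹ * a * b) = a * b by group) X
            ≫ (𝒞.φ₂ b a X).inv)) := by
    have h3 := 𝒞.braiding₃ b X X a hX
    simp only [hμ] at h3
    rw [← Category.assoc, ← h3]
    simp only [Category.assoc]
    have hd : Functor.LaxMonoidal.μ (𝒞.φ b) X ((𝒞.φ a).obj X)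
        ≫ Functor.OplaxMonoidal.δ (𝒞.φ b) X ((𝒞.φ a).obj X) = 𝟙 _ :=
      Functor.Monoidal.μ_δ _ _ _
    rw [hd, Category.comp_id]
  simp only [GBraidedCat.twist]
  rw [map_twist_aux (𝒞.φ b) (𝒞.τ X X a hX), hτ, ← hE]
  trans ((λ_ ((𝒞.φ b).obj X)).inv
    ≫ ((Functor.LaxMonoidal.ε (𝒞.φ b) ≫ (𝒞.φ b).map (coev' X)
        ≫ Functor.OplaxMonoidal.δ (𝒞.φ b) (dual X) X) ▷ (𝒞.φ b).obj X)
    ≫ (α_ ((𝒞.φ b).obj (dual X)) ((𝒞.φ b).obj X) ((𝒞.φ b).obj X)).hom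
    ≫ (((𝒞.φ b).obj (dual X) ◁ (𝒞.τ ((𝒞.φ b).obj X) ((𝒞.φ b).obj X) (b⁻¹ * a * b) (𝒞.φ_mem b hX)
          ≫ ((𝒞.φ b).obj X ◁ ((𝒞.φ₂ (b⁻¹ * a * b) b X).hom
              ≫ φObjCast 𝒞.φ (show b * (b⁻¹ * a * b) = a * b by group) X
              ≫ (𝒞.φ₂ b a X).inv))))
        ≫ (Fl (𝒞.φ b) X ▷ ((𝒞.φ b).obj X ⊗ (𝒞.φ b).obj ((𝒞.φ a).obj X))))
    ≫ (α_ (dual ((𝒞.φ b).obj X)) ((𝒞.φ b).obj X) ((𝒞.φ b).obj ((𝒞.φ a).obj X))).inv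
    ≫ (ev ((𝒞.φ b).obj X) ▷ (𝒞.φ b).obj ((𝒞.φ a).obj X))
    ≫ (λ_ ((𝒞.φ b).obj ((𝒞.φ a).obj X))).hom)
  · monoidal
  rw [whisker_exchange]
  trans ((λ_ ((𝒞.φ b).obj X)).inv
    ≫ (((Functor.LaxMonoidal.ε (𝒞.φ b) ≫ (𝒞.φ b).map (coev' X)
        ≫ Functor.OplaxMonoidal.δ (𝒞.φ b) (dual X) X)
          ≫ (Fl (𝒞.φ b) X ▷ (𝒞.φ b).obj X)) ▷ (𝒞.φ b).obj X)
    ≫ (α_ (dual ((𝒞.φ b).obj X)) ((𝒞.φ b).obj X) ((𝒞.φ b).obj X)).hom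
    ≫ (dual ((𝒞.φ b).obj X) ◁ (𝒞.τ ((𝒞.φ b).obj X) ((𝒞.φ b).obj X) (b⁻¹ * a * b) (𝒞.φ_mem b hX)
          ≫ ((𝒞.φ b).obj X ◁ ((𝒞.φ₂ (b⁻¹ * a * b) b X).hom
              ≫ φObjCast 𝒞.φ (show b * (b⁻¹ * a * b) = a * b by group) X
              ≫ (𝒞.φ₂ b a X).inv))))
    ≫ (α_ (dual ((𝒞.φ b).obj X)) ((𝒞.φ b).obj X) ((𝒞.φ b).obj ((𝒞.φ a).obj X))).inv
    ≫ (ev ((𝒞.φ b).obj X) ▷ (𝒞.φ b).obj ((𝒞.φ a).obj X))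
    ≫ (λ_ ((𝒞.φ b).obj ((𝒞.φ a).obj X))).hom)
  · monoidal
  rw [hK]
  trans ((λ_ ((𝒞.φ b).obj X)).inv
    ≫ (coev' ((𝒞.φ b).obj X) ▷ (𝒞.φ b).obj X)
    ≫ (α_ (dual ((𝒞.φ b).obj X)) ((𝒞.φ b).obj X) ((𝒞.φ b).obj X)).hom
    ≫ (dual ((𝒞.φ b).obj X) ◁ 𝒞.τ ((𝒞.φ b).obj X) ((𝒞.φ b).obj X) (b⁻¹ * a * b) (𝒞.φ_mem b hX))
    ≫ (α_ (dual ((𝒞.φ b).obj X)) ((𝒞.φ b).obj X)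
        ((𝒞.φ (b⁻¹ * a * b)).obj ((𝒞.φ b).obj X))).inv
    ≫ (((dual ((𝒞.φ b).obj X) ⊗ (𝒞.φ b).obj X) ◁ ((𝒞.φ₂ (b⁻¹ * a * b) b X).hom
          ≫ φObjCast 𝒞.φ (show b * (b⁻¹ * a * b) = a * b by group) X
          ≫ (𝒞.φ₂ b a X).inv))
        ≫ (ev ((𝒞.φ b).obj X) ▷ (𝒞.φ b).obj ((𝒞.φ a).obj X)))
    ≫ (λ_ ((𝒞.φ b).obj ((𝒞.φ a).obj X))).hom)
  · monoidal
  rw [whisker_exchange]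
  monoidal

end Statement

end SurgeryHQFT
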